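/- Let D(q_B) := { f ∈ H : f'|_{(−1,1)} ∈ L²((−1,1), (1−x²)dx) } and q_B(f) := π ∫_{−1}^{1} (1−x²)|f'(x)|² dx, where H is the one-particle Hilbert space of the U(1) current (completion of C^∞_c(ℝ) in the norm ‖f‖² = ∫_0^∞ p|f̂(p)|²dp). Then the quadratic form q_B is closed: if f_n → f in H and q_B(f_n − f_m) → 0, then f ∈ D(q_B) and q_B(f_n − f) → 0. -/

import Mathlib

open MeasureTheory Filter Topology Real

/-- The Fourier transform `φ̂(p) = (2π)^{-1/2} ∫ φ(x) e^{ipx} dx` of a real function. -/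
noncomputable def fhat (g : ℝ → ℝ) (p : ℝ) : ℂ :=
  (Real.sqrt (2 * π) : ℂ)⁻¹ * ∫ x : ℝ, (g x : ℂ) * Complex.exp (Complex.I * p * x)

open scoped ENNReal


/-- Cauchy-Schwarz for lintegral with exponent 2. -/
lemma myCS {α : Type*} [MeasurableSpace α] (ν : Measure α) (u v : α → ℝ≥0∞)
    (hu : AEMeasurable u ν) (hv : AEMeasurable v ν) :
    ∫⁻ x, u x * v x ∂ν ≤ (∫⁻ x, (u x)^2 ∂ν)^(1/2:ℝ) * (∫⁻ x, (v x)^2 ∂ν)^(1/2:ℝ) := by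
  have h2 : Real.HolderConjugate 2 2 := Real.HolderConjugate.two_two
  have := ENNReal.lintegral_mul_le_Lp_mul_Lq ν h2 hu hv
  simpa [ENNReal.rpow_two] using this

noncomputable def wμ : Measure ℝ :=
  (volume.restrict (Set.Ioo (-1:ℝ) 1)).withDensity (fun x => ENNReal.ofReal (1 - x^2))

lemma sq_nnnorm (t : ℝ) : ENNReal.ofReal (t ^ 2) = (‖t‖₊ : ℝ≥0∞) ^ 2 := by
  rw [← enorm_eq_nnnorm, Real.enorm_eq_ofReal_abs, ← ENNReal.ofReal_pow (abs_nonneg t), sq_abs]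

lemma lint_wμ (g : ℝ → ℝ) (hg : Measurable g) :
    ∫⁻ x in Set.Ioo (-1:ℝ) 1, ENNReal.ofReal ((1 - x^2) * g x ^ 2)
      = ∫⁻ x, (‖g x‖₊ : ℝ≥0∞) ^ 2 ∂wμ := by
  rw [wμ, lintegral_withDensity_eq_lintegral_mul _
    (by fun_prop) (by fun_prop)]
  refine setLIntegral_congr_fun measurableSet_Ioo (fun x hx => ?_)
  have h1 : (0:ℝ) ≤ 1 - x^2 := by nlinarith [hx.1, hx.2]
  simp only [Pi.mul_apply]
  rw [ENNReal.ofReal_mul h1, sq_nnnorm]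

lemma eLpNorm_sq_wμ (g : ℝ → ℝ) (hg : Measurable g) :
    (eLpNorm g 2 wμ) ^ 2 = ∫⁻ x in Set.Ioo (-1:ℝ) 1, ENNReal.ofReal ((1 - x^2) * g x ^ 2) := by
  rw [lint_wμ g hg, eLpNorm_eq_lintegral_rpow_enorm_toReal two_ne_zero ENNReal.ofNat_ne_top]
  simp only [enorm_eq_nnnorm]
  rw [← ENNReal.rpow_natCast _ 2, ← ENNReal.rpow_mul]
  norm_num

lemma memℒ2_wμ (g : ℝ → ℝ) (hg : Measurable g)
    (h : ∫⁻ x in Set.Ioo (-1:ℝ) 1, ENNReal.ofReal ((1 - x^2) * g x ^ 2) < ⊤) :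
    MemLp g 2 wμ := by
  refine ⟨hg.aestronglyMeasurable, ?_⟩
  rw [← eLpNorm_sq_wμ g hg] at h
  exact lt_of_le_of_ne le_top (by intro ht; rw [ht, pow_two] at h; simp at h)

lemma exists_L2_limit (G : ℕ → ℝ → ℝ) (hGmeas : ∀ n, Measurable (G n))
    (hGfin : ∀ n, ∫⁻ x in Set.Ioo (-1:ℝ) 1,
      ENNReal.ofReal ((1 - x ^ 2) * (G n x) ^ 2) < ⊤)
    (hGcauchy : ∀ ε : ℝ, 0 < ε → ∃ N : ℕ, ∀ n ≥ N, ∀ k ≥ N,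
      ∫⁻ x in Set.Ioo (-1 : ℝ) 1,
        ENNReal.ofReal ((1 - x ^ 2) * (G n x - G k x) ^ 2) < ENNReal.ofReal ε) :
    ∃ Glim : ℝ → ℝ, Measurable Glim ∧ MemLp Glim 2 wμ ∧
      Tendsto (fun n => eLpNorm (fun x => G n x - Glim x) 2 wμ) atTop (𝓝 0) := by
  have hmem : ∀ n, MemLp (G n) 2 wμ := fun n => memℒ2_wμ _ (hGmeas n) (hGfin n)
  set u : ℕ → Lp ℝ 2 wμ := fun n => (hmem n).toLp (G n) with hu
  have hdist : ∀ n k, dist (u n) (u k) = (eLpNorm (fun x => G n x - G k x) 2 wμ).toReal := by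
    intro n k
    rw [dist_eq_norm, hu]
    simp only []
    rw [← MemLp.toLp_sub (hmem n) (hmem k), Lp.norm_toLp]
    rfl
  have hcau : CauchySeq u := by
    refine Metric.cauchySeq_iff.2 fun ε hε => ?_
    obtain ⟨N, hN⟩ := hGcauchy (ε^2) (by positivity)
    refine ⟨N, fun n hn k hk => ?_⟩
    rw [hdist n k]
    have hlt : eLpNorm (fun x => G n x - G k x) 2 wμ < ENNReal.ofReal ε := by
      by_contra hcon
      push_neg at hcon
      have h2 : (ENNReal.ofReal ε)^2 ≤ (eLpNorm (fun x => G n x - G k x) 2 wμ)^2 :=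
        pow_le_pow_left' hcon 2
      rw [eLpNorm_sq_wμ _ (by fun_prop), ← ENNReal.ofReal_pow hε.le] at h2
      exact absurd (hN n hn k hk) (not_lt.2 h2)
    exact (ENNReal.lt_ofReal_iff_toReal_lt (ne_top_of_lt hlt)).1 hlt
  obtain ⟨L, hL⟩ := cauchySeq_tendsto_of_complete hcau
  have haesm := (Lp.aestronglyMeasurable L)
  refine ⟨haesm.mk L, haesm.stronglyMeasurable_mk.measurable, ?_, ?_⟩
  · exact (Lp.memLp L).ae_eq haesm.ae_eq_mk
  · have key : ∀ n, eLpNorm (fun x => G n x - haesm.mk L x) 2 wμ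
        = ENNReal.ofReal ‖u n - L‖ := by
      intro n
      rw [Lp.norm_def, ENNReal.ofReal_toReal (Lp.eLpNorm_ne_top _)]
      refine eLpNorm_congr_ae ?_
      filter_upwards [Lp.coeFn_sub (u n) L, MemLp.coeFn_toLp (hmem n),
        haesm.ae_eq_mk] with x h1 h2 h3
      rw [← h3, h1, Pi.sub_apply, h2]
    simp only [key]
    have hnorm : Tendsto (fun n => ‖u n - L‖) atTop (𝓝 0) :=
      (tendsto_iff_norm_sub_tendsto_zero).1 hL
    have := (ENNReal.continuous_ofReal.tendsto 0).comp hnorm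
    simpa [Function.comp_def, ofReal_norm] using this

open FourierTransform

lemma fhat_neg (g : ℝ → ℝ) (p : ℝ) : fhat g (-p) = starRingEnd ℂ (fhat g p) := by
  unfold fhat
  rw [map_mul, ← integral_conj]
  congr 1
  · simp
  · congr 1; ext x
    rw [map_mul, ← Complex.exp_conj, Complex.conj_ofReal]
    congr 2
    rw [map_mul, map_mul, Complex.conj_I, Complex.conj_ofReal, Complex.conj_ofReal]
    push_cast; ring

noncomputable def toComplexSchwartz (φ : SchwartzMap ℝ ℝ) : SchwartzMap ℝ ℂ where
  toFun x := (φ x : ℂ)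
  smooth' := Complex.ofRealCLM.contDiff.comp (φ.smooth ⊤)
  decay' := by
    intro k n
    obtain ⟨C, hC, h⟩ := φ.decay k n
    refine ⟨C, fun x => ?_⟩
    have heq : (fun x => ((φ x : ℝ) : ℂ)) = Complex.ofRealLI ∘ ⇑φ := rfl
    rw [heq, Complex.ofRealLI.norm_iteratedFDeriv_comp_left (φ.smooth ⊤).contDiffAt
      (by exact_mod_cast le_top)]
    exact h x

@[simp] lemma toComplexSchwartz_apply (φ : SchwartzMap ℝ ℝ) (x : ℝ) :
    toComplexSchwartz φ x = (φ x : ℂ) := rfl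

lemma fhat_eq (φ : SchwartzMap ℝ ℝ) (p : ℝ) :
    fhat ⇑φ p = (Real.sqrt (2 * π) : ℂ)⁻¹ * 𝓕 (⇑(toComplexSchwartz φ)) (-p / (2 * π)) := by
  unfold fhat
  congr 1
  rw [Real.fourier_real_eq_integral_exp_smul]
  congr 1; ext x
  have : (-2 : ℝ) * π * x * (-p / (2 * π)) = p * x := by
    field_simp
  rw [this]
  rw [smul_eq_mul, toComplexSchwartz_apply, mul_comm]
  congr 2
  push_cast; ring

lemma fhat_continuous (φ : SchwartzMap ℝ ℝ) : Continuous (fhat ⇑φ) := by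
  have h : Continuous (𝓕 (⇑(toComplexSchwartz φ))) := by
    rw [← SchwartzMap.fourier_coe]
    exact (𝓕 (toComplexSchwartz φ)).continuous
  have heq : (fhat ⇑φ) = fun p =>
      (Real.sqrt (2*π):ℂ)⁻¹ * 𝓕 (⇑(toComplexSchwartz φ)) (-p/(2*π)) := funext (fhat_eq φ)
  rw [heq]
  fun_prop

lemma fhat_decay (φ : SchwartzMap ℝ ℝ) :
    ∃ D : ℝ, 0 ≤ D ∧ ∀ p : ℝ, ‖fhat ⇑φ p‖ ≤ D / (1 + p^2) := by
  set ψ := SchwartzMap.fourierTransformCLM ℝ (toComplexSchwartz φ) with hψ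
  obtain ⟨C0, hC0, h0⟩ := ψ.decay 0 0
  obtain ⟨C2, hC2, h2⟩ := ψ.decay 2 0
  have hψbound : ∀ ξ : ℝ, ‖ψ ξ‖ ≤ (C0 + C2) / (1 + ξ^2) := by
    intro ξ
    have e0 := h0 ξ; have e2 := h2 ξ
    rw [norm_iteratedFDeriv_zero] at e0 e2
    simp only [pow_zero, one_mul] at e0
    rw [le_div_iff₀ (by positivity)]
    have habs : ‖ξ‖^2 = ξ^2 := by rw [Real.norm_eq_abs, sq_abs]
    nlinarith [norm_nonneg (ψ ξ)]
  refine ⟨(C0 + C2) * (1 + 4 * π^2), by positivity, fun p => ?_⟩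
  set ξ := -p / (2*π) with hξ
  have hp2 : p^2 = 4 * π^2 * ξ^2 := by
    rw [hξ]; field_simp; ring
  have hnorm : ‖fhat ⇑φ p‖ ≤ ‖ψ ξ‖ := by
    rw [fhat_eq]
    have hcoe : 𝓕 (⇑(toComplexSchwartz φ)) ξ = ψ ξ := by
      rw [hψ, SchwartzMap.fourierTransformCLM_apply, SchwartzMap.fourier_coe]
    rw [← hξ, hcoe, norm_mul]
    have h1 : ‖((Real.sqrt (2*π) : ℝ) : ℂ)⁻¹‖ ≤ 1 := by
      rw [norm_inv, Complex.norm_real, Real.norm_eq_abs,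
        abs_of_nonneg (Real.sqrt_nonneg _)]
      rw [inv_le_one_iff₀]
      right
      rw [show (1:ℝ) = Real.sqrt 1 from (Real.sqrt_one).symm]
      exact Real.sqrt_le_sqrt (by nlinarith [Real.pi_gt_three])
    calc ‖((Real.sqrt (2*π):ℝ):ℂ)⁻¹‖ * ‖ψ ξ‖ ≤ 1 * ‖ψ ξ‖ :=
          mul_le_mul_of_nonneg_right h1 (norm_nonneg _)
      _ = ‖ψ ξ‖ := one_mul _
  refine hnorm.trans ((hψbound ξ).trans ?_)
  rw [div_le_div_iff₀ (by positivity) (by positivity)]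
  nlinarith [sq_nonneg ξ, sq_nonneg π, mul_nonneg (sq_nonneg π) (sq_nonneg ξ),
    mul_nonneg (mul_nonneg hC0.le (sq_nonneg π)) (sq_nonneg ξ),
    mul_nonneg (mul_nonneg hC2.le (sq_nonneg π)) (sq_nonneg ξ),
    mul_nonneg hC0.le (sq_nonneg ξ), mul_nonneg hC2.le (sq_nonneg ξ),
    mul_nonneg hC0.le (sq_nonneg π), mul_nonneg hC2.le (sq_nonneg π)]

lemma lint_neg_half (h : ℝ → ℝ≥0∞) (hm : Measurable h) :
    ∫⁻ p in Set.Iio (0:ℝ), h p = ∫⁻ p in Set.Ioi (0:ℝ), h (-p) := by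
  have hneg : Measurable (fun p : ℝ => -p) := measurable_neg
  calc ∫⁻ p in Set.Iio (0:ℝ), h p
      = ∫⁻ p in Set.Iio (0:ℝ), h p ∂(Measure.map Neg.neg volume) := by
        rw [Measure.map_neg_eq_self (volume : Measure ℝ)]
    _ = ∫⁻ p in (Neg.neg) ⁻¹' (Set.Iio (0:ℝ)), h (-p) := by
        rw [setLIntegral_map measurableSet_Iio hm hneg]
    _ = ∫⁻ p in Set.Ioi (0:ℝ), h (-p) := by
        congr 1
        ext x; simp

lemma lint_split (h : ℝ → ℝ≥0∞) (hm : Measurable h) :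
    ∫⁻ p, h p = (∫⁻ p in Set.Iio (0:ℝ), h p) + ∫⁻ p in Set.Ioi (0:ℝ), h p := by
  rw [← setLIntegral_univ h]
  have huniv : (Set.univ : Set ℝ) =ᵐ[volume] ((Set.Iio (0:ℝ) ∪ Set.Ioi (0:ℝ)) : Set ℝ) := by
    rw [Set.Iio_union_Ioi]
    symm
    rw [ae_eq_univ, compl_compl]
    exact measure_singleton 0
  rw [setLIntegral_congr huniv,
    lintegral_union measurableSet_Ioi
      ((Set.Iic_disjoint_Ioi (le_refl (0:ℝ))).mono_left Set.Iio_subset_Iic_self)]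

lemma Mphi_lt_top (φ : SchwartzMap ℝ ℝ) :
    ∫⁻ p in Set.Ioi (0:ℝ), ENNReal.ofReal (p * ‖fhat ⇑φ (-p)‖^2) < ⊤ := by
  obtain ⟨D, hD, hdecay⟩ := fhat_decay φ
  have hbound : ∀ p ∈ Set.Ioi (0:ℝ),
      ENNReal.ofReal (p * ‖fhat ⇑φ (-p)‖^2) ≤ ENNReal.ofReal (D^2 * (1 + p^2)⁻¹) := by
    intro p hp
    have hp0 : (0:ℝ) < p := hp
    apply ENNReal.ofReal_le_ofReal
    have h1 : ‖fhat ⇑φ (-p)‖ ≤ D / (1 + p^2) := by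
      have h := hdecay (-p); rwa [show ((-p):ℝ)^2 = p^2 from by ring] at h
    have h2 : ‖fhat ⇑φ (-p)‖^2 ≤ (D / (1+p^2))^2 :=
      pow_le_pow_left₀ (norm_nonneg _) h1 2
    calc p * ‖fhat ⇑φ (-p)‖^2 ≤ p * (D / (1+p^2))^2 := by nlinarith
      _ = D^2 * (p / (1+p^2)) * (1+p^2)⁻¹ := by field_simp
      _ ≤ D^2 * 1 * (1+p^2)⁻¹ := by
          have : p / (1+p^2) ≤ 1 := by
            rw [div_le_one (by positivity)]; nlinarith
          have h3 : (0:ℝ) ≤ (1+p^2)⁻¹ := by positivity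
          nlinarith [mul_nonneg (sq_nonneg D) h3]
      _ = D^2 * (1+p^2)⁻¹ := by ring
  calc ∫⁻ p in Set.Ioi (0:ℝ), ENNReal.ofReal (p * ‖fhat ⇑φ (-p)‖^2)
      ≤ ∫⁻ p in Set.Ioi (0:ℝ), ENNReal.ofReal (D^2 * (1 + p^2)⁻¹) :=
        setLIntegral_mono (by fun_prop) hbound
    _ ≤ ∫⁻ p, ENNReal.ofReal (D^2 * (1 + p^2)⁻¹) := setLIntegral_le_lintegral _ _
    _ < ⊤ := (integrable_inv_one_add_sq.const_mul (D^2)).lintegral_lt_top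

lemma integrand_nnnorm (φ : SchwartzMap ℝ ℝ) (Fd : ℝ → ℂ) (p : ℝ) :
    (‖(-(Complex.I) * p * Fd p) * fhat ⇑φ (-p)‖₊ : ℝ≥0∞)
      = ENNReal.ofReal (|p| * (‖Fd p‖ * ‖fhat ⇑φ (-p)‖)) := by
  rw [← enorm_eq_nnnorm, ← ofReal_norm]
  congr 1
  rw [norm_mul, norm_mul, norm_mul, norm_neg, Complex.norm_I, one_mul,
    Complex.norm_real, Real.norm_eq_abs, mul_assoc]

lemma fourier_side_bound (φ : SchwartzMap ℝ ℝ) (Fd : ℝ → ℂ) (hFd : Measurable Fd)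
    (hsym : ∀ p : ℝ, Fd (-p) = starRingEnd ℂ (Fd p)) :
    ∫⁻ p, (‖(-(Complex.I) * p * Fd p) * fhat ⇑φ (-p)‖₊ : ℝ≥0∞)
      ≤ 2 * (∫⁻ p in Set.Ioi (0:ℝ), ENNReal.ofReal (p * ‖Fd p‖^2))^(1/2:ℝ)
          * (∫⁻ p in Set.Ioi (0:ℝ), ENNReal.ofReal (p * ‖fhat ⇑φ (-p)‖^2))^(1/2:ℝ) := by
  set h : ℝ → ℝ≥0∞ := fun p => ENNReal.ofReal (|p| * (‖Fd p‖ * ‖fhat ⇑φ (-p)‖)) with hh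
  have hfc : Continuous (fun p : ℝ => fhat ⇑φ (-p)) := (fhat_continuous φ).comp continuous_neg
  have hmeas : Measurable h := by
    apply ENNReal.measurable_ofReal.comp
    exact (measurable_id.abs.mul ((hFd.norm).mul hfc.measurable.norm))
  have hrw : (fun p : ℝ => (‖(-(Complex.I) * p * Fd p) * fhat ⇑φ (-p)‖₊ : ℝ≥0∞)) = h :=
    funext (integrand_nnnorm φ Fd)
  rw [hrw]
  have hsymm : ∀ p : ℝ, h (-p) = h p := by
    intro p
    have e1 : ‖Fd (-p)‖ = ‖Fd p‖ := by rw [hsym]; exact RCLike.norm_conj _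
    have e2 : ‖fhat ⇑φ p‖ = ‖fhat ⇑φ (-p)‖ := by
      rw [fhat_neg]; exact (RCLike.norm_conj _).symm
    show ENNReal.ofReal (|(-p)| * (‖Fd (-p)‖ * ‖fhat ⇑φ (-(-p))‖))
        = ENNReal.ofReal (|p| * (‖Fd p‖ * ‖fhat ⇑φ (-p)‖))
    rw [abs_neg, neg_neg, e1, e2]
  have hsplit : ∫⁻ p, h p = 2 * ∫⁻ p in Set.Ioi (0:ℝ), h p := by
    rw [lint_split h hmeas, lint_neg_half h hmeas]
    simp only [hsymm]
    rw [two_mul]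
  rw [hsplit]
  rw [mul_assoc]
  apply mul_le_mul_right
  set u : ℝ → ℝ≥0∞ := fun p => ENNReal.ofReal (Real.sqrt p * ‖Fd p‖) with hu
  set v : ℝ → ℝ≥0∞ := fun p => ENNReal.ofReal (Real.sqrt p * ‖fhat ⇑φ (-p)‖) with hv
  have humeas : Measurable u := by
    apply ENNReal.measurable_ofReal.comp
    exact ((Real.continuous_sqrt.measurable).mul hFd.norm)
  have hvmeas : Measurable v := by
    apply ENNReal.measurable_ofReal.comp
    exact ((Real.continuous_sqrt.measurable).mul hfc.measurable.norm)
  have huv : ∀ p ∈ Set.Ioi (0:ℝ), h p = u p * v p := by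
    intro p hp
    have hp0 : (0:ℝ) < p := hp
    rw [hh, hu, hv]
    simp only []
    rw [← ENNReal.ofReal_mul (by positivity)]
    congr 1
    rw [abs_of_pos hp0]
    rw [show Real.sqrt p * ‖Fd p‖ * (Real.sqrt p * ‖fhat ⇑φ (-p)‖)
      = (Real.sqrt p * Real.sqrt p) * (‖Fd p‖ * ‖fhat ⇑φ (-p)‖) from by ring,
      Real.mul_self_sqrt hp0.le]
  have hu2 : ∀ p ∈ Set.Ioi (0:ℝ), (u p)^2 = ENNReal.ofReal (p * ‖Fd p‖^2) := by
    intro p hp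
    have hp0 : (0:ℝ) < p := hp
    rw [hu]
    simp only []
    rw [← ENNReal.ofReal_pow (by positivity)]
    congr 1
    rw [mul_pow, Real.sq_sqrt hp0.le]
  have hv2 : ∀ p ∈ Set.Ioi (0:ℝ), (v p)^2 = ENNReal.ofReal (p * ‖fhat ⇑φ (-p)‖^2) := by
    intro p hp
    have hp0 : (0:ℝ) < p := hp
    rw [hv]
    simp only []
    rw [← ENNReal.ofReal_pow (by positivity)]
    congr 1
    rw [mul_pow, Real.sq_sqrt hp0.le]
  calc ∫⁻ p in Set.Ioi (0:ℝ), h p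
      = ∫⁻ p in Set.Ioi (0:ℝ), u p * v p :=
        setLIntegral_congr_fun measurableSet_Ioi huv
    _ ≤ (∫⁻ p in Set.Ioi (0:ℝ), (u p)^2)^(1/2:ℝ) * (∫⁻ p in Set.Ioi (0:ℝ), (v p)^2)^(1/2:ℝ) :=
        myCS _ u v humeas.aemeasurable hvmeas.aemeasurable
    _ = (∫⁻ p in Set.Ioi (0:ℝ), ENNReal.ofReal (p * ‖Fd p‖^2))^(1/2:ℝ)
          * (∫⁻ p in Set.Ioi (0:ℝ), ENNReal.ofReal (p * ‖fhat ⇑φ (-p)‖^2))^(1/2:ℝ) := by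
        rw [setLIntegral_congr_fun measurableSet_Ioi hu2,
          setLIntegral_congr_fun measurableSet_Ioi hv2]

lemma fourier_side_integrable (φ : SchwartzMap ℝ ℝ) (Fd : ℝ → ℂ) (hFd : Measurable Fd)
    (hsym : ∀ p : ℝ, Fd (-p) = starRingEnd ℂ (Fd p))
    (hfin : ∫⁻ p in Set.Ioi (0:ℝ), ENNReal.ofReal (p * ‖Fd p‖^2) < ⊤) :
    Integrable (fun p : ℝ => (-(Complex.I) * p * Fd p) * fhat ⇑φ (-p)) := by
  have hfc : Continuous (fun p : ℝ => fhat ⇑φ (-p)) := (fhat_continuous φ).comp continuous_neg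
  refine ⟨Measurable.aestronglyMeasurable ?_, ?_⟩
  · exact ((measurable_const.mul Complex.measurable_ofReal).mul hFd).mul hfc.measurable
  · show (∫⁻ p, (‖(-(Complex.I) * p * Fd p) * fhat ⇑φ (-p)‖₊ : ℝ≥0∞)) < ⊤
    refine lt_of_le_of_lt (fourier_side_bound φ Fd hFd hsym) ?_
    refine ENNReal.mul_lt_top (ENNReal.mul_lt_top (by simp) ?_) ?_
    · exact ENNReal.rpow_lt_top_of_nonneg (by norm_num) hfin.ne
    · exact ENNReal.rpow_lt_top_of_nonneg (by norm_num) (Mphi_lt_top φ).ne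

lemma tendsto_helper (A : ℕ → ℝ≥0∞) (hA : Tendsto A atTop (𝓝 0)) (M : ℝ≥0∞) (hM : M ≠ ⊤) :
    Tendsto (fun n => ((A n)^(1/2:ℝ) * M).toReal) atTop (𝓝 0) := by
  have h1 : Tendsto (fun n => (A n)^(1/2:ℝ)) atTop (𝓝 0) := by
    have := ((ENNReal.continuous_rpow_const (y := (1/2:ℝ))).tendsto (0:ℝ≥0∞)).comp hA
    simp only [ENNReal.zero_rpow_of_pos (by norm_num : (0:ℝ) < 1/2)] at this
    exact this
  have h2 := ENNReal.Tendsto.mul_const h1 (Or.inr hM)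
  rw [zero_mul] at h2
  have h3 := (ENNReal.tendsto_toReal (by simp : (0:ℝ≥0∞) ≠ ⊤)).comp h2
  simp only [ENNReal.toReal_zero] at h3
  exact h3



/-- Closedness of the quadratic form `q_B(f) = π ∫_{-1}^1 (1-x²)|f'(x)|² dx` on the
one-particle space `H` of the U(1) current. Elements of `H` are represented by their
Fourier transforms: measurable `F : ℝ → ℂ` with `F(-p) = conj F(p)` and
`∫_0^∞ p|F(p)|² dp < ∞`; `f_n → f` in `H` means `∫_0^∞ p|F_n(p) - F(p)|² dp → 0`.
`f_n ∈ D(q_B)` is witnessed by `G n = f_n'|_{(-1,1)} ∈ L²((-1,1),(1-x²)dx)`, i.e.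
`∫ G_n φ = ⟨f_n', φ⟩ = ∫ (-ip F_n(p)) φ̂(-p) dp` for all test functions `φ` supported in
`(-1,1)`. If `f_n → f` in `H` and `q_B(f_n - f_m) → 0`, then `f ∈ D(q_B)` and
`q_B(f_n - f) → 0`. -/
theorem stmt15 (F : ℕ → ℝ → ℂ) (Flim : ℝ → ℂ)
    (hFmeas : ∀ n, Measurable (F n)) (hFlimmeas : Measurable Flim)
    (hFreal : ∀ n, ∀ p : ℝ, F n (-p) = starRingEnd ℂ (F n p))
    (hFlimreal : ∀ p : ℝ, Flim (-p) = starRingEnd ℂ (Flim p))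
    (hFfin : ∀ n, ∫⁻ p in Set.Ioi (0 : ℝ), ENNReal.ofReal (p * ‖F n p‖ ^ 2) < ⊤)
    (hFlimfin : ∫⁻ p in Set.Ioi (0 : ℝ), ENNReal.ofReal (p * ‖Flim p‖ ^ 2) < ⊤)
    (hconv : Tendsto (fun n => ∫⁻ p in Set.Ioi (0 : ℝ),
      ENNReal.ofReal (p * ‖F n p - Flim p‖ ^ 2)) atTop (𝓝 0))
    (G : ℕ → ℝ → ℝ) (hGmeas : ∀ n, Measurable (G n))
    (hGfin : ∀ n, ∫⁻ x in Set.Ioo (-1 : ℝ) 1,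
      ENNReal.ofReal ((1 - x ^ 2) * (G n x) ^ 2) < ⊤)
    (hrep : ∀ n, ∀ φ : SchwartzMap ℝ ℝ, tsupport ⇑φ ⊆ Set.Ioo (-1 : ℝ) 1 →
      ((∫ x in Set.Ioo (-1 : ℝ) 1, G n x * φ x : ℝ) : ℂ)
        = ∫ p : ℝ, (-(Complex.I) * p * F n p) * fhat ⇑φ (-p))
    (hGcauchy : ∀ ε : ℝ, 0 < ε → ∃ N : ℕ, ∀ n ≥ N, ∀ k ≥ N,
      ∫⁻ x in Set.Ioo (-1 : ℝ) 1,
        ENNReal.ofReal ((1 - x ^ 2) * (G n x - G k x) ^ 2) < ENNReal.ofReal ε) :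
    ∃ Glim : ℝ → ℝ, Measurable Glim ∧
      (∫⁻ x in Set.Ioo (-1 : ℝ) 1, ENNReal.ofReal ((1 - x ^ 2) * (Glim x) ^ 2) < ⊤) ∧
      (∀ φ : SchwartzMap ℝ ℝ, tsupport ⇑φ ⊆ Set.Ioo (-1 : ℝ) 1 →
        ((∫ x in Set.Ioo (-1 : ℝ) 1, Glim x * φ x : ℝ) : ℂ)
          = ∫ p : ℝ, (-(Complex.I) * p * Flim p) * fhat ⇑φ (-p)) ∧
      Tendsto (fun n => ∫⁻ x in Set.Ioo (-1 : ℝ) 1,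
        ENNReal.ofReal ((1 - x ^ 2) * (G n x - Glim x) ^ 2)) atTop (𝓝 0) := by
  obtain ⟨Glim, hGlimmeas, hGlimmem, htend⟩ := exists_L2_limit G hGmeas hGfin hGcauchy
  have hglimfin : ∫⁻ x in Set.Ioo (-1:ℝ) 1,
      ENNReal.ofReal ((1 - x ^ 2) * (Glim x) ^ 2) < ⊤ := by
    rw [← eLpNorm_sq_wμ Glim hGlimmeas]
    exact ENNReal.pow_lt_top hGlimmem.2
  have hLn_eq : ∀ n, (∫⁻ x in Set.Ioo (-1:ℝ) 1,
      ENNReal.ofReal ((1 - x ^ 2) * (G n x - Glim x) ^ 2))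
      = (eLpNorm (fun x => G n x - Glim x) 2 wμ)^2 :=
    fun n => (eLpNorm_sq_wμ _ (by fun_prop)).symm
  have htendL : Tendsto (fun n => ∫⁻ x in Set.Ioo (-1:ℝ) 1,
      ENNReal.ofReal ((1 - x ^ 2) * (G n x - Glim x) ^ 2)) atTop (𝓝 0) := by
    simp only [hLn_eq]
    simpa using ENNReal.Tendsto.pow (n := 2) htend
  refine ⟨Glim, hGlimmeas, hglimfin, ?_, htendL⟩
  intro φ hφ
  have hKcompact : IsCompact (tsupport ⇑φ) :=
    Metric.isCompact_of_isClosed_isBounded (isClosed_tsupport _)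
      ((Metric.isBounded_Ioo (-1:ℝ) 1).subset hφ)
  obtain ⟨c, hc0, hc⟩ : ∃ c : ℝ, 0 < c ∧ ∀ x ∈ tsupport ⇑φ, c ≤ 1 - x^2 := by
    rcases (tsupport ⇑φ).eq_empty_or_nonempty with he | hne
    · exact ⟨1, one_pos, by rw [he]; simp⟩
    · obtain ⟨x₀, hx₀K, hmin⟩ := hKcompact.exists_isMinOn hne
        ((continuous_const.sub (continuous_pow 2)).continuousOn)
      have hx₀ : x₀ ∈ Set.Ioo (-1:ℝ) 1 := hφ hx₀K
      exact ⟨1 - x₀^2, by nlinarith [hx₀.1, hx₀.2], fun x hx => hmin hx⟩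
  obtain ⟨M, hM0, hM⟩ : ∃ M : ℝ, 0 < M ∧ ∀ x, |φ x| ≤ M := by
    obtain ⟨C, hC, h⟩ := φ.decay 0 0
    refine ⟨C, hC, fun x => ?_⟩
    have hx := h x
    rw [pow_zero, one_mul, norm_iteratedFDeriv_zero] at hx
    exact (Real.norm_eq_abs _ ▸ hx)
  set Cφ : ℝ≥0∞ := ∫⁻ x in Set.Ioo (-1:ℝ) 1, ENNReal.ofReal (φ x^2 / (1 - x^2)) with hCφdef
  have hCφ : Cφ < ⊤ := by
    have hb : ∀ x ∈ Set.Ioo (-1:ℝ) 1,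
        ENNReal.ofReal (φ x^2 / (1 - x^2)) ≤ ENNReal.ofReal (M^2 / c) := by
      intro x hx
      apply ENNReal.ofReal_le_ofReal
      by_cases hxs : x ∈ tsupport ⇑φ
      · refine div_le_div₀ (by positivity) ?_ hc0 (hc x hxs)
        nlinarith [hM x, abs_nonneg (φ x), sq_abs (φ x)]
      · rw [image_eq_zero_of_notMem_tsupport hxs]
        norm_num
        positivity
    calc Cφ ≤ ∫⁻ _x in Set.Ioo (-1:ℝ) 1, ENNReal.ofReal (M^2 / c) :=
          setLIntegral_mono measurable_const hb
      _ = ENNReal.ofReal (M^2 / c) * volume (Set.Ioo (-1:ℝ) 1) := setLIntegral_const _ _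
      _ < ⊤ := ENNReal.mul_lt_top ENNReal.ofReal_lt_top
          (by rw [Real.volume_Ioo]; exact ENNReal.ofReal_lt_top)
  have pairCS : ∀ g : ℝ → ℝ, Measurable g →
      (∫⁻ x in Set.Ioo (-1:ℝ) 1, (‖g x * φ x‖₊ : ℝ≥0∞))
        ≤ (∫⁻ x in Set.Ioo (-1:ℝ) 1,
            ENNReal.ofReal ((1-x^2) * g x^2))^(1/2:ℝ) * Cφ^(1/2:ℝ) := by
    intro g hg
    set u : ℝ → ℝ≥0∞ := fun x => ENNReal.ofReal (Real.sqrt (1-x^2) * |g x|) with hu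
    set v : ℝ → ℝ≥0∞ := fun x => ENNReal.ofReal (|φ x| / Real.sqrt (1-x^2)) with hv
    have humeas : Measurable u := by
      apply ENNReal.measurable_ofReal.comp
      fun_prop
    have hvmeas : Measurable v := by
      apply ENNReal.measurable_ofReal.comp
      fun_prop
    have huv : ∀ x ∈ Set.Ioo (-1:ℝ) 1, (‖g x * φ x‖₊ : ℝ≥0∞) = u x * v x := by
      intro x hx
      have hw : (0:ℝ) < 1 - x^2 := by nlinarith [hx.1, hx.2]
      have hs : Real.sqrt (1-x^2) ≠ 0 := ne_of_gt (Real.sqrt_pos.2 hw)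
      rw [hu, hv]
      simp only []
      rw [← ENNReal.ofReal_mul (by positivity), ← enorm_eq_nnnorm, ← ofReal_norm]
      congr 1
      rw [norm_mul, Real.norm_eq_abs, Real.norm_eq_abs]
      field_simp
    have hu2 : ∀ x ∈ Set.Ioo (-1:ℝ) 1, (u x)^2 = ENNReal.ofReal ((1-x^2) * g x^2) := by
      intro x hx
      have hw : (0:ℝ) ≤ 1 - x^2 := by nlinarith [hx.1, hx.2]
      rw [hu]; simp only []
      rw [← ENNReal.ofReal_pow (by positivity)]
      congr 1
      rw [mul_pow, Real.sq_sqrt hw, sq_abs]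
    have hv2 : ∀ x ∈ Set.Ioo (-1:ℝ) 1, (v x)^2 = ENNReal.ofReal (φ x^2 / (1-x^2)) := by
      intro x hx
      have hw : (0:ℝ) < 1 - x^2 := by nlinarith [hx.1, hx.2]
      rw [hv]; simp only []
      rw [← ENNReal.ofReal_pow (by positivity)]
      congr 1
      rw [div_pow, Real.sq_sqrt hw.le, sq_abs]
    calc ∫⁻ x in Set.Ioo (-1:ℝ) 1, (‖g x * φ x‖₊ : ℝ≥0∞)
        = ∫⁻ x in Set.Ioo (-1:ℝ) 1, u x * v x :=
          setLIntegral_congr_fun measurableSet_Ioo huv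
      _ ≤ (∫⁻ x in Set.Ioo (-1:ℝ) 1, (u x)^2)^(1/2:ℝ)
            * (∫⁻ x in Set.Ioo (-1:ℝ) 1, (v x)^2)^(1/2:ℝ) :=
          myCS _ u v humeas.aemeasurable hvmeas.aemeasurable
      _ = _ := by
          rw [setLIntegral_congr_fun measurableSet_Ioo hu2,
            setLIntegral_congr_fun measurableSet_Ioo hv2]
  have pairInt : ∀ g : ℝ → ℝ, Measurable g →
      (∫⁻ x in Set.Ioo (-1:ℝ) 1, ENNReal.ofReal ((1-x^2) * g x^2)) < ⊤ →
      IntegrableOn (fun x => g x * φ x) (Set.Ioo (-1:ℝ) 1) volume := by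
    intro g hg hfin
    refine ⟨(hg.mul φ.continuous.measurable).aestronglyMeasurable, ?_⟩
    show (∫⁻ x in Set.Ioo (-1:ℝ) 1, (‖g x * φ x‖₊:ℝ≥0∞)) < ⊤
    refine lt_of_le_of_lt (pairCS g hg) ?_
    exact ENNReal.mul_lt_top (ENNReal.rpow_lt_top_of_nonneg (by norm_num) hfin.ne)
      (ENNReal.rpow_lt_top_of_nonneg (by norm_num) hCφ.ne)
  have hmemn : ∀ n, MemLp (G n) 2 wμ := fun n => memℒ2_wμ _ (hGmeas n) (hGfin n)
  have hLnfin : ∀ n, (∫⁻ x in Set.Ioo (-1:ℝ) 1,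
      ENNReal.ofReal ((1 - x ^ 2) * (G n x - Glim x) ^ 2)) ≠ ⊤ := by
    intro n
    rw [hLn_eq]
    have hsub : MemLp (fun x => G n x - Glim x) 2 wμ := (hmemn n).sub hGlimmem
    exact (ENNReal.pow_lt_top hsub.2).ne
  have hLHS : Tendsto (fun n => ∫ x in Set.Ioo (-1:ℝ) 1, G n x * φ x) atTop
      (𝓝 (∫ x in Set.Ioo (-1:ℝ) 1, Glim x * φ x)) := by
    rw [tendsto_iff_norm_sub_tendsto_zero]
    have hb : ∀ n, ‖(∫ x in Set.Ioo (-1:ℝ) 1, G n x * φ x)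
        - ∫ x in Set.Ioo (-1:ℝ) 1, Glim x * φ x‖
        ≤ ((∫⁻ x in Set.Ioo (-1:ℝ) 1,
            ENNReal.ofReal ((1 - x ^ 2) * (G n x - Glim x) ^ 2))^(1/2:ℝ)
              * Cφ^(1/2:ℝ)).toReal := by
      intro n
      rw [← integral_sub (pairInt (G n) (hGmeas n) (hGfin n))
        (pairInt Glim hGlimmeas hglimfin)]
      have heq : (fun x => G n x * φ x - Glim x * φ x)
          = fun x => (G n x - Glim x) * φ x := by ext x; ring
      rw [heq]
      refine (norm_integral_le_lintegral_norm _).trans ?_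
      have heq2 : ∀ x : ℝ, ENNReal.ofReal ‖(G n x - Glim x) * φ x‖
          = (‖(G n x - Glim x) * φ x‖₊ : ℝ≥0∞) := fun x => (ofReal_norm _).trans (enorm_eq_nnnorm _)
      simp only [heq2]
      refine ENNReal.toReal_mono ?_ (pairCS _ (by fun_prop))
      exact (ENNReal.mul_lt_top (ENNReal.rpow_lt_top_of_nonneg (by norm_num) (hLnfin n))
        (ENNReal.rpow_lt_top_of_nonneg (by norm_num) hCφ.ne)).ne
    refine squeeze_zero (fun n => norm_nonneg _) hb ?_
    exact tendsto_helper _ htendL _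
      (ENNReal.rpow_lt_top_of_nonneg (by norm_num) hCφ.ne).ne
  have hAnfin : ∀ n, (∫⁻ p in Set.Ioi (0:ℝ),
      ENNReal.ofReal (p * ‖F n p - Flim p‖ ^ 2)) ≠ ⊤ := by
    intro n
    have hb : ∀ p ∈ Set.Ioi (0:ℝ), ENNReal.ofReal (p * ‖F n p - Flim p‖ ^ 2)
        ≤ 2 * ENNReal.ofReal (p * ‖F n p‖^2) + 2 * ENNReal.ofReal (p * ‖Flim p‖^2) := by
      intro p hp
      have hp0 : (0:ℝ) < p := hp
      have h1 : ‖F n p - Flim p‖^2 ≤ 2*‖F n p‖^2 + 2*‖Flim p‖^2 := by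
        nlinarith [norm_sub_le (F n p) (Flim p), norm_nonneg (F n p), norm_nonneg (Flim p),
          sq_nonneg (‖F n p‖ - ‖Flim p‖), norm_nonneg (F n p - Flim p)]
      calc ENNReal.ofReal (p * ‖F n p - Flim p‖ ^ 2)
          ≤ ENNReal.ofReal (2 * (p * ‖F n p‖^2) + 2 * (p * ‖Flim p‖^2)) :=
            ENNReal.ofReal_le_ofReal (by nlinarith)
        _ ≤ ENNReal.ofReal (2 * (p * ‖F n p‖^2)) + ENNReal.ofReal (2 * (p * ‖Flim p‖^2)) :=
            ENNReal.ofReal_add_le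
        _ = 2 * ENNReal.ofReal (p * ‖F n p‖^2) + 2 * ENNReal.ofReal (p * ‖Flim p‖^2) := by
            rw [ENNReal.ofReal_mul (by norm_num : (0:ℝ) ≤ 2),
              ENNReal.ofReal_mul (by norm_num : (0:ℝ) ≤ 2)]
            norm_num
    have hm1 : Measurable (fun p : ℝ => 2 * ENNReal.ofReal (p * ‖F n p‖^2)) :=
      (ENNReal.measurable_ofReal.comp
        (measurable_id.mul ((hFmeas n).norm.pow_const 2))).const_mul 2
    have hm2 : Measurable (fun p : ℝ => 2 * ENNReal.ofReal (p * ‖Flim p‖^2)) :=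
      (ENNReal.measurable_ofReal.comp
        (measurable_id.mul (hFlimmeas.norm.pow_const 2))).const_mul 2
    have hle := setLIntegral_mono (μ := volume) (hm1.add hm2) hb
    have hsum : ∫⁻ p in Set.Ioi (0:ℝ),
        (2 * ENNReal.ofReal (p * ‖F n p‖^2) + 2 * ENNReal.ofReal (p * ‖Flim p‖^2))
        = 2 * (∫⁻ p in Set.Ioi (0:ℝ), ENNReal.ofReal (p * ‖F n p‖^2))
          + 2 * (∫⁻ p in Set.Ioi (0:ℝ), ENNReal.ofReal (p * ‖Flim p‖^2)) := by
      rw [lintegral_add_left hm1, lintegral_const_mul' 2 _ ENNReal.ofNat_ne_top,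
        lintegral_const_mul' 2 _ ENNReal.ofNat_ne_top]
    refine (lt_of_le_of_lt hle ?_).ne
    simp only [Pi.add_apply]
    rw [hsum]
    exact ENNReal.add_lt_top.2 ⟨ENNReal.mul_lt_top ENNReal.ofNat_lt_top (hFfin n),
      ENNReal.mul_lt_top ENNReal.ofNat_lt_top hFlimfin⟩
  have hMφ := Mphi_lt_top φ
  have hsymdiff : ∀ n, ∀ p : ℝ, (F n (-p) - Flim (-p)) = starRingEnd ℂ (F n p - Flim p) := by
    intro n p; rw [hFreal n p, hFlimreal p, map_sub]
  have hintn : ∀ n, Integrable (fun p : ℝ => (-(Complex.I) * p * F n p) * fhat ⇑φ (-p)) :=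
    fun n => fourier_side_integrable φ (F n) (hFmeas n) (hFreal n) (hFfin n)
  have hintlim : Integrable (fun p : ℝ => (-(Complex.I) * p * Flim p) * fhat ⇑φ (-p)) :=
    fourier_side_integrable φ Flim hFlimmeas hFlimreal hFlimfin
  have hRHS : Tendsto (fun n => ∫ p : ℝ, (-(Complex.I) * p * F n p) * fhat ⇑φ (-p)) atTop
      (𝓝 (∫ p : ℝ, (-(Complex.I) * p * Flim p) * fhat ⇑φ (-p))) := by
    rw [tendsto_iff_norm_sub_tendsto_zero]
    have hb : ∀ n, ‖(∫ p : ℝ, (-(Complex.I) * p * F n p) * fhat ⇑φ (-p))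
        - ∫ p : ℝ, (-(Complex.I) * p * Flim p) * fhat ⇑φ (-p)‖
        ≤ (((∫⁻ p in Set.Ioi (0:ℝ), ENNReal.ofReal (p * ‖F n p - Flim p‖ ^ 2))^(1/2:ℝ))
            * (2 * (∫⁻ p in Set.Ioi (0:ℝ),
                ENNReal.ofReal (p * ‖fhat ⇑φ (-p)‖^2))^(1/2:ℝ))).toReal := by
      intro n
      rw [← integral_sub (hintn n) hintlim]
      have heq : (fun p : ℝ => (-(Complex.I) * p * F n p) * fhat ⇑φ (-p)
          - (-(Complex.I) * p * Flim p) * fhat ⇑φ (-p))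
          = fun p : ℝ => (-(Complex.I) * p * (F n p - Flim p)) * fhat ⇑φ (-p) := by
        ext p; ring
      rw [heq]
      refine (norm_integral_le_lintegral_norm _).trans ?_
      have hoeq : ∀ p : ℝ, ENNReal.ofReal ‖(-(Complex.I) * p * (F n p - Flim p)) * fhat ⇑φ (-p)‖
          = (‖(-(Complex.I) * p * (F n p - Flim p)) * fhat ⇑φ (-p)‖₊ : ℝ≥0∞) :=
        fun p => (ofReal_norm _).trans (enorm_eq_nnnorm _)
      simp only [hoeq]
      refine ENNReal.toReal_mono ?_ ?_
      · exact (ENNReal.mul_lt_top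
          (ENNReal.rpow_lt_top_of_nonneg (by norm_num) (hAnfin n))
          (ENNReal.mul_lt_top ENNReal.ofNat_lt_top
            (ENNReal.rpow_lt_top_of_nonneg (by norm_num) hMφ.ne))).ne
      · have hfsb := fourier_side_bound φ (fun p => F n p - Flim p)
          ((hFmeas n).sub hFlimmeas) (hsymdiff n)
        calc ∫⁻ p, (‖(-(Complex.I) * p * (F n p - Flim p)) * fhat ⇑φ (-p)‖₊ : ℝ≥0∞)
            ≤ 2 * (∫⁻ p in Set.Ioi (0:ℝ), ENNReal.ofReal (p * ‖F n p - Flim p‖^2))^(1/2:ℝ)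
              * (∫⁻ p in Set.Ioi (0:ℝ), ENNReal.ofReal (p * ‖fhat ⇑φ (-p)‖^2))^(1/2:ℝ) := hfsb
          _ = _ := by ring
    refine squeeze_zero (fun n => norm_nonneg _) hb ?_
    exact tendsto_helper _ hconv _
      (ENNReal.mul_lt_top ENNReal.ofNat_lt_top
        (ENNReal.rpow_lt_top_of_nonneg (by norm_num) hMφ.ne)).ne
  have h1 : Tendsto (fun n => ((∫ x in Set.Ioo (-1:ℝ) 1, G n x * φ x : ℝ) : ℂ)) atTop
      (𝓝 ((∫ x in Set.Ioo (-1:ℝ) 1, Glim x * φ x : ℝ) : ℂ)) :=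
    (Complex.continuous_ofReal.tendsto _).comp hLHS
  have h2 : (fun n => ((∫ x in Set.Ioo (-1:ℝ) 1, G n x * φ x : ℝ) : ℂ))
      = fun n => ∫ p : ℝ, (-(Complex.I) * p * F n p) * fhat ⇑φ (-p) :=
    funext fun n => hrep n φ hφ
  rw [h2] at h1
  exact tendsto_nhds_unique h1 hRHS
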